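/- Let (ξ_i)_{i=1}^{n} be independent mean-zero random vectors in a separable Hilbert space, each bounded by M almost surely, with total variance σ² = E[Σᵢ ‖ξᵢ‖²]. Then for any t > 0, P(‖Σ_{i=1}^n ξᵢ‖ ≥ t) ≤ 2 exp(−t² / (2σ² + 2tM/3)). -/

import Mathlib

open MeasureTheory ProbabilityTheory

set_option maxHeartbeats 1000000

open scoped InnerProductSpace

private lemma fact_ge : ∀ k : ℕ, 2 * 3 ^ k ≤ Nat.factorial (k + 2) := by
  intro k
  induction k with
  | zero => simp [Nat.factorial]
  | succ k ih =>
    have : Nat.factorial (k + 3) = (k + 3) * Nat.factorial (k + 2) := rfl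
    calc 2 * 3 ^ (k+1) = 3 * (2 * 3 ^ k) := by ring
    _ ≤ 3 * Nat.factorial (k + 2) := by omega
    _ ≤ (k + 3) * Nat.factorial (k + 2) := Nat.mul_le_mul_right _ (by omega)
    _ = Nat.factorial (k + 3) := rfl

private lemma exp_tsum (x : ℝ) : Real.exp x = ∑' n : ℕ, x ^ n / Nat.factorial n := by
  rw [Real.exp_eq_exp_ℝ, NormedSpace.exp_eq_tsum_div]

private lemma summable_exp_series (x : ℝ) : Summable (fun n : ℕ => x ^ n / Nat.factorial n) :=
  Real.summable_pow_div_factorial x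

private lemma summable_cosh_series (x : ℝ) (hx : 0 ≤ x) :
    Summable (fun j : ℕ => x ^ j / Nat.factorial (2 * j)) := by
  apply Summable.of_nonneg_of_le (fun j => by positivity)
    (fun j => ?_) (summable_exp_series x)
  apply div_le_div_of_nonneg_left (pow_nonneg hx j) ?_ ?_
  · exact_mod_cast Nat.factorial_pos j
  · exact_mod_cast Nat.factorial_le (by omega)

/-- `cosh x = ∑ x^(2j)/(2j)!`. -/
private lemma cosh_tsum (x : ℝ) :
    Real.cosh x = ∑' j : ℕ, x ^ (2 * j) / Nat.factorial (2 * j) := by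
  have hsum := (summable_exp_series x).add (summable_exp_series (-x))
  have e1 : (fun n : ℕ => x ^ n / Nat.factorial n + (-x) ^ n / Nat.factorial n)
      = fun n : ℕ => (x ^ n + (-x) ^ n) / Nat.factorial n := funext fun n => (add_div _ _ _).symm
  have h1 : Summable (fun n : ℕ => (x ^ n + (-x) ^ n) / Nat.factorial n) := by
    rw [← e1]; exact hsum
  have key : Real.cosh x = ∑' n : ℕ, (x ^ n + (-x) ^ n) / Nat.factorial n / 2 := by
    rw [Real.cosh_eq, exp_tsum, exp_tsum,
      ← Summable.tsum_add (summable_exp_series x) (summable_exp_series (-x))]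
    rw [show (∑' n : ℕ, (x ^ n / Nat.factorial n + (-x) ^ n / Nat.factorial n)) =
        ∑' n : ℕ, (x ^ n + (-x) ^ n) / Nat.factorial n from by rw [e1]]
    exact tsum_div_const.symm
  rw [key]
  have h2 : Summable (fun n : ℕ => (x ^ n + (-x) ^ n) / Nat.factorial n / 2) := h1.div_const 2
  have he : Summable (fun j : ℕ => (x ^ (2*j) + (-x) ^ (2*j)) / Nat.factorial (2*j) / 2) :=
    h2.comp_injective (fun a b h => by omega)
  have ho : Summable (fun j : ℕ => (x ^ (2*j+1) + (-x) ^ (2*j+1)) / Nat.factorial (2*j+1) / 2) :=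
    h2.comp_injective (fun a b h => by omega)
  rw [← tsum_even_add_odd he ho]
  have hzero : ∀ j : ℕ, (x ^ (2*j+1) + (-x) ^ (2*j+1)) / Nat.factorial (2*j+1) / 2 = 0 := by
    intro j
    have : (-x) ^ (2*j+1) = -x^(2*j+1) := Odd.neg_pow ⟨j, by ring⟩ x
    rw [this]; ring
  rw [tsum_congr hzero, tsum_zero, add_zero]
  apply tsum_congr
  intro j
  have : (-x) ^ (2*j) = x^(2*j) := Even.neg_pow ⟨j, by ring⟩ x
  rw [this]; ring

private lemma exp_bound' {s u : ℝ} (hs : 0 ≤ s) (hsu : s ≤ u) (hu : u < 3) :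
    Real.exp s ≤ 1 + s + s ^ 2 / 2 * (1 - u / 3)⁻¹ := by
  have hu0 : 0 ≤ u := le_trans hs hsu
  have h3 : u / 3 < 1 := by linarith
  have h30 : 0 ≤ u / 3 := by positivity
  have hsum := summable_exp_series s
  have hsum1 : Summable (fun n : ℕ => s ^ (n+1) / Nat.factorial (n+1)) :=
    ((summable_nat_add_iff 1).2 hsum)
  have hsum2 : Summable (fun n : ℕ => s ^ (n+2) / Nat.factorial (n+2)) :=
    ((summable_nat_add_iff 2).2 hsum)
  have hgeo : Summable (fun n : ℕ => s ^ 2 / 2 * (u/3) ^ n) :=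
    (summable_geometric_of_lt_one h30 h3).mul_left _
  have hterm : ∀ n : ℕ, s ^ (n+2) / Nat.factorial (n+2) ≤ s ^ 2 / 2 * (u/3) ^ n := by
    intro n
    have hf : (2 * 3 ^ n : ℝ) ≤ (Nat.factorial (n+2) : ℝ) := by exact_mod_cast fact_ge n
    have hsn : s ^ n ≤ u ^ n := pow_le_pow_left₀ hs hsu n
    have h1 : s ^ (n+2) ≤ s ^ 2 * u ^ n := by
      rw [pow_add, mul_comm]
      exact mul_le_mul_of_nonneg_left hsn (by positivity)
    calc s ^ (n+2) / Nat.factorial (n+2) ≤ (s ^ 2 * u ^ n) / (2 * 3 ^ n) := by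
          apply div_le_div₀ (by positivity) h1 (by positivity) hf
      _ = s ^ 2 / 2 * (u/3) ^ n := by rw [div_pow]; ring
  have htail : (∑' n : ℕ, s ^ (n+2) / Nat.factorial (n+2)) ≤ s ^ 2 / 2 * (1 - u/3)⁻¹ := by
    calc (∑' n : ℕ, s ^ (n+2) / Nat.factorial (n+2)) ≤ ∑' n : ℕ, s ^ 2 / 2 * (u/3) ^ n :=
          Summable.tsum_le_tsum hterm hsum2 hgeo
      _ = s ^ 2 / 2 * (1 - u/3)⁻¹ := by
          rw [tsum_mul_left, tsum_geometric_of_lt_one h30 h3]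
  have e0 : Real.exp s = 1 + s + ∑' n : ℕ, s ^ (n+2) / Nat.factorial (n+2) := by
    rw [exp_tsum, Summable.tsum_eq_zero_add hsum, Summable.tsum_eq_zero_add hsum1]
    simp [Nat.factorial]
    ring
  rw [e0]
  linarith

private lemma cosh_sqrt_combo {A B p q : ℝ} (hA : 0 ≤ A) (hB : 0 ≤ B) (hp : 0 ≤ p)
    (hq : 0 ≤ q) (hpq : p + q = 1) :
    Real.cosh (Real.sqrt (p * A + q * B)) ≤
      p * Real.cosh (Real.sqrt A) + q * Real.cosh (Real.sqrt B) := by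
  have hw : 0 ≤ p * A + q * B := by positivity
  have key : ∀ w : ℝ, 0 ≤ w →
      Real.cosh (Real.sqrt w) = ∑' j : ℕ, w ^ j / Nat.factorial (2 * j) := by
    intro w hw0
    rw [cosh_tsum]
    apply tsum_congr; intro j
    rw [pow_mul, Real.sq_sqrt hw0]
  rw [key _ hw, key _ hA, key _ hB]
  have hsA : Summable (fun j : ℕ => A ^ j / Nat.factorial (2 * j)) := summable_cosh_series A hA
  have hsB : Summable (fun j : ℕ => B ^ j / Nat.factorial (2 * j)) := summable_cosh_series B hB
  have hsW : Summable (fun j : ℕ => (p * A + q * B) ^ j / Nat.factorial (2 * j)) :=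
    summable_cosh_series _ hw
  have hsR : Summable (fun j : ℕ =>
      p * (A ^ j / Nat.factorial (2 * j)) + q * (B ^ j / Nat.factorial (2 * j))) :=
    (hsA.mul_left p).add (hsB.mul_left q)
  have hterm : ∀ j : ℕ, (p * A + q * B) ^ j / Nat.factorial (2 * j) ≤
      p * (A ^ j / Nat.factorial (2 * j)) + q * (B ^ j / Nat.factorial (2 * j)) := by
    intro j
    have hc := (convexOn_pow j).2 (Set.mem_Ici.2 hA) (Set.mem_Ici.2 hB) hp hq hpq
    simp only [smul_eq_mul] at hc
    have hfac : (0:ℝ) < Nat.factorial (2 * j) := by exact_mod_cast Nat.factorial_pos _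
    rw [div_le_iff₀ hfac]
    calc (p * A + q * B) ^ j ≤ p * A ^ j + q * B ^ j := hc
      _ = (p * (A ^ j / Nat.factorial (2*j)) + q * (B ^ j / Nat.factorial (2*j)))
            * Nat.factorial (2*j) := by field_simp
  calc (∑' j : ℕ, (p * A + q * B) ^ j / Nat.factorial (2 * j))
      ≤ ∑' j : ℕ, (p * (A ^ j / Nat.factorial (2 * j)) + q * (B ^ j / Nat.factorial (2 * j))) :=
        Summable.tsum_le_tsum hterm hsW hsR
    _ = p * (∑' j : ℕ, A ^ j / Nat.factorial (2 * j))
          + q * (∑' j : ℕ, B ^ j / Nat.factorial (2 * j)) := by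
        rw [Summable.tsum_add (hsA.mul_left p) (hsB.mul_left q), tsum_mul_left, tsum_mul_left]

private lemma key_pointwise {E : Type*} [NormedAddCommGroup E] [InnerProductSpace ℝ E]
    {l : ℝ} (hl : 0 ≤ l) (x y : E) :
    Real.cosh (l * ‖x + y‖) ≤
      Real.cosh (l * ‖x‖) * (Real.exp (l * ‖y‖) - l * ‖y‖)
        + ⟪(l * Real.sinh (l * ‖x‖) / ‖x‖) • x, y⟫_ℝ := by
  have coshle : ∀ s : ℝ, 0 ≤ s → Real.cosh s ≤ Real.exp s - s := by
    intro s hs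
    have h1 := Real.cosh_add_sinh s
    have h2 : s ≤ Real.sinh s := Real.self_le_sinh_iff.2 hs
    linarith
  by_cases hx : x = 0
  · simp only [hx, zero_add, norm_zero, mul_zero, Real.sinh_zero, smul_zero, inner_zero_left,
      add_zero, Real.cosh_zero, one_mul]
    exact coshle _ (by positivity)
  by_cases hy : y = 0
  · simp [hy, Real.cosh_zero, Real.exp_zero]
  have hnx : (0:ℝ) < ‖x‖ := norm_pos_iff.2 hx
  have hny : (0:ℝ) < ‖y‖ := norm_pos_iff.2 hy
  set a := l * ‖x‖ with ha
  set b := l * ‖y‖ with hb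
  have ha0 : 0 ≤ a := by positivity
  have hb0 : 0 ≤ b := by positivity
  set c := ⟪x, y⟫_ℝ / (‖x‖ * ‖y‖) with hc
  have hcabs : |c| ≤ 1 := abs_real_inner_div_norm_mul_norm_le_one x y
  have hc1 : c ≤ 1 := le_of_abs_le hcabs
  have hcm1 : -1 ≤ c := neg_le_of_abs_le hcabs
  have hinner : ⟪x, y⟫_ℝ = c * (‖x‖ * ‖y‖) := by
    rw [hc]; field_simp
  -- Step 1: convexity bound
  have step1 : Real.cosh (l * ‖x + y‖) ≤
      (1 + c)/2 * Real.cosh (a + b) + (1 - c)/2 * Real.cosh (a - b) := by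
    have hsq : (l * ‖x + y‖)^2 = (1 + c)/2 * (a + b)^2 + (1 - c)/2 * (a - b)^2 := by
      have hn := norm_add_sq_real x y
      have : (l * ‖x + y‖)^2 = l^2 * ‖x + y‖^2 := by ring
      rw [this, hn, hinner, ha, hb]; ring
    have heq : l * ‖x + y‖ = Real.sqrt ((1 + c)/2 * (a + b)^2 + (1 - c)/2 * (a - b)^2) := by
      rw [← hsq, Real.sqrt_sq (by positivity)]
    rw [heq]
    have := cosh_sqrt_combo (sq_nonneg (a + b)) (sq_nonneg (a - b))
      (by linarith : (0:ℝ) ≤ (1 + c)/2) (by linarith : (0:ℝ) ≤ (1 - c)/2)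
      (by ring : (1 + c)/2 + (1 - c)/2 = 1)
    calc Real.cosh (Real.sqrt ((1 + c)/2 * (a + b)^2 + (1 - c)/2 * (a - b)^2))
        ≤ (1 + c)/2 * Real.cosh (Real.sqrt ((a+b)^2)) + (1 - c)/2 * Real.cosh (Real.sqrt ((a-b)^2)) := this
      _ = (1 + c)/2 * Real.cosh (a + b) + (1 - c)/2 * Real.cosh (a - b) := by
          rw [Real.sqrt_sq_eq_abs, Real.sqrt_sq_eq_abs, Real.cosh_abs, Real.cosh_abs]
  -- Step 2: rewrite via addition formulas
  have step2 : (1 + c)/2 * Real.cosh (a + b) + (1 - c)/2 * Real.cosh (a - b)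
      = Real.cosh a * Real.cosh b + c * (Real.sinh a * Real.sinh b) := by
    rw [Real.cosh_add, Real.cosh_sub]; ring
  -- Step 3: bound the odd part
  have hsa : 0 ≤ Real.sinh a := Real.sinh_nonneg_iff.2 ha0
  have hsbb : 0 ≤ Real.sinh b - b := by
    have := Real.self_le_sinh_iff.2 hb0; linarith
  have hcs : ⟪x, y⟫_ℝ ≤ ‖x‖ * ‖y‖ := real_inner_le_norm x y
  have hfrac : c ≤ 1 := hc1
  have step3 : c * (Real.sinh a * Real.sinh b) ≤
      (l * Real.sinh a / ‖x‖) * ⟪x, y⟫_ℝ + Real.sinh a * (Real.sinh b - b) := by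
    have expand : (l * Real.sinh a / ‖x‖) * ⟪x, y⟫_ℝ + Real.sinh a * (Real.sinh b - b)
        - c * (Real.sinh a * Real.sinh b) = (1 - c) * (Real.sinh a * (Real.sinh b - b)) := by
      rw [hinner, hb]; field_simp; ring
    have hnn : 0 ≤ (1 - c) * (Real.sinh a * (Real.sinh b - b)) := by
      apply mul_nonneg (by linarith) (mul_nonneg hsa hsbb)
    linarith
  -- Step 4: assemble
  have hsc : Real.sinh a ≤ Real.cosh a := by
    have := Real.cosh_sub_sinh a
    have : 0 < Real.exp (-a) := Real.exp_pos _
    nlinarith [Real.cosh_sub_sinh a, Real.exp_pos (-a)]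
  have step4 : Real.sinh a * (Real.sinh b - b) ≤ Real.cosh a * (Real.sinh b - b) :=
    mul_le_mul_of_nonneg_right hsc hsbb
  have hw : ⟪(l * Real.sinh (l * ‖x‖) / ‖x‖) • x, y⟫_ℝ = (l * Real.sinh a / ‖x‖) * ⟪x, y⟫_ℝ := by
    rw [real_inner_smul_left, ha]
  have e' : Real.cosh a * (Real.exp b - b)
      = Real.cosh a * Real.cosh b + Real.cosh a * (Real.sinh b - b) := by
    rw [← Real.cosh_add_sinh b]; ring
  rw [hw]
  calc Real.cosh (l * ‖x + y‖)
      ≤ (1 + c)/2 * Real.cosh (a + b) + (1 - c)/2 * Real.cosh (a - b) := step1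
    _ = Real.cosh a * Real.cosh b + c * (Real.sinh a * Real.sinh b) := step2
    _ ≤ Real.cosh a * Real.cosh b + ((l * Real.sinh a / ‖x‖) * ⟪x, y⟫_ℝ
          + Real.sinh a * (Real.sinh b - b)) := by linarith
    _ ≤ Real.cosh a * Real.cosh b + ((l * Real.sinh a / ‖x‖) * ⟪x, y⟫_ℝ
          + Real.cosh a * (Real.sinh b - b)) := by linarith
    _ = Real.cosh a * (Real.exp b - b) + (l * Real.sinh a / ‖x‖) * ⟪x, y⟫_ℝ := by
        rw [e']; ring

private lemma inner_step {E : Type*} [NormedAddCommGroup E] [InnerProductSpace ℝ E]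
    [CompleteSpace E] [MeasurableSpace E] [BorelSpace E] [TopologicalSpace.SeparableSpace E]
    (ν : Measure E) [IsProbabilityMeasure ν]
    {M l : ℝ} (hl : 0 ≤ l) (hM0 : 0 ≤ M) (hlM : l * M < 3)
    (hmean : ∫ y, y ∂ν = 0) (hbd : ∀ᵐ y ∂ν, ‖y‖ ≤ M) (x : E) :
    ∫ y, Real.cosh (l * ‖x + y‖) ∂ν ≤
      Real.cosh (l * ‖x‖) * (1 + l^2/2 * (1 - l * M/3)⁻¹ * (∫ y, ‖y‖^2 ∂ν)) := by
  haveI : SecondCountableTopology E := UniformSpace.secondCountable_of_separable E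
  set w : E := (l * Real.sinh (l * ‖x‖) / ‖x‖) • x with hw
  set K : ℝ := l^2/2 * (1 - l * M/3)⁻¹ with hK
  have hKpos : 0 ≤ K := by
    apply mul_nonneg (by positivity)
    apply inv_nonneg.2; nlinarith
  -- integrability facts
  have hcont1 : Continuous fun y : E => Real.cosh (l * ‖x + y‖) :=
    Real.continuous_cosh.comp (continuous_const.mul ((continuous_const.add continuous_id).norm))
  have hf1 : Integrable (fun y : E => Real.cosh (l * ‖x + y‖)) ν := by
    apply Integrable.mono' (integrable_const (Real.cosh (l * (‖x‖ + M))))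
      hcont1.aestronglyMeasurable
    filter_upwards [hbd] with y hy
    rw [Real.norm_eq_abs, abs_of_pos (Real.cosh_pos _)]
    apply Real.cosh_le_cosh.2
    rw [abs_of_nonneg (by positivity), abs_of_nonneg (by positivity)]
    apply mul_le_mul_of_nonneg_left _ hl
    calc ‖x + y‖ ≤ ‖x‖ + ‖y‖ := norm_add_le _ _
      _ ≤ ‖x‖ + M := by linarith
  have hcont2 : Continuous fun y : E => Real.exp (l * ‖y‖) - l * ‖y‖ :=
    (Real.continuous_exp.comp (continuous_const.mul continuous_norm)).sub
      (continuous_const.mul continuous_norm)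
  have hInt_exp : Integrable (fun y : E => Real.exp (l * ‖y‖) - l * ‖y‖) ν := by
    apply Integrable.mono' (integrable_const (Real.exp (l * M)))
      hcont2.aestronglyMeasurable
    filter_upwards [hbd] with y hy
    have h1 : l * ‖y‖ ≤ l * M := mul_le_mul_of_nonneg_left hy hl
    have h2 : (0:ℝ) ≤ l * ‖y‖ := by positivity
    rw [Real.norm_eq_abs, abs_le]
    constructor
    · linarith [Real.add_one_le_exp (l * ‖y‖), Real.exp_pos (l * M)]
    · have h3 : Real.exp (l * ‖y‖) ≤ Real.exp (l * M) := Real.exp_le_exp.2 h1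
      linarith
  have hInt_inner : Integrable (fun y : E => ⟪w, y⟫_ℝ) ν := by
    apply Integrable.mono' (integrable_const (‖w‖ * M))
      ((Continuous.inner (continuous_const : Continuous fun _ : E => w)
        continuous_id) : Continuous fun y : E => ⟪w, y⟫_ℝ).aestronglyMeasurable
    filter_upwards [hbd] with y hy
    calc ‖⟪w, y⟫_ℝ‖ = |⟪w, y⟫_ℝ| := rfl
      _ ≤ ‖w‖ * ‖y‖ := abs_real_inner_le_norm w y
      _ ≤ ‖w‖ * M := mul_le_mul_of_nonneg_left hy (norm_nonneg w)
  have hId : Integrable (fun y : E => y) ν := by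
    apply Integrable.mono' (integrable_const M) continuous_id.aestronglyMeasurable
    filter_upwards [hbd] with y hy using hy
  have hSq : Integrable (fun y : E => ‖y‖^2) ν := by
    apply Integrable.mono' (integrable_const (M^2))
      (show Continuous fun y : E => ‖y‖^2 from continuous_norm.pow 2).aestronglyMeasurable
    filter_upwards [hbd] with y hy
    rw [Real.norm_eq_abs, abs_of_nonneg (by positivity)]
    exact pow_le_pow_left₀ (norm_nonneg y) hy 2
  have hcoshx : (0:ℝ) < Real.cosh (l * ‖x‖) := Real.cosh_pos _
  -- main chain
  calc ∫ y, Real.cosh (l * ‖x + y‖) ∂ν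
      ≤ ∫ y, (Real.cosh (l * ‖x‖) * (Real.exp (l * ‖y‖) - l * ‖y‖) + ⟪w, y⟫_ℝ) ∂ν := by
        apply integral_mono hf1 ((hInt_exp.const_mul _).add hInt_inner)
        intro y
        exact key_pointwise hl x y
    _ = Real.cosh (l * ‖x‖) * ∫ y, (Real.exp (l * ‖y‖) - l * ‖y‖) ∂ν := by
        rw [integral_add (hInt_exp.const_mul _) hInt_inner, integral_const_mul,
          integral_inner hId w, hmean, inner_zero_right, add_zero]
    _ ≤ Real.cosh (l * ‖x‖) * (1 + K * (∫ y, ‖y‖^2 ∂ν)) := by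
        apply mul_le_mul_of_nonneg_left _ (le_of_lt hcoshx)
        calc ∫ y, (Real.exp (l * ‖y‖) - l * ‖y‖) ∂ν
            ≤ ∫ y, (1 + K * ‖y‖^2) ∂ν := by
              have hInt2 : Integrable (fun y : E => 1 + K * ‖y‖^2) ν := by
                simpa using (integrable_const (1:ℝ)).add (hSq.const_mul K)
              apply integral_mono_ae hInt_exp hInt2
              filter_upwards [hbd] with y hy
              have h1 : l * ‖y‖ ≤ l * M := mul_le_mul_of_nonneg_left hy hl
              have h2 : (0:ℝ) ≤ l * ‖y‖ := by positivity
              have h3 := exp_bound' h2 h1 hlM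
              have hsq : (l * ‖y‖)^2/2 * (1 - l * M/3)⁻¹ = K * ‖y‖^2 := by rw [hK]; ring
              linarith
            _ = 1 + K * (∫ y, ‖y‖^2 ∂ν) := by
              rw [integral_add (integrable_const (1:ℝ)) (hSq.const_mul K),
                integral_const, integral_const_mul]
              simp

private lemma step_lemma {Ω : Type*} [MeasurableSpace Ω] (P : Measure Ω) [IsProbabilityMeasure P]
    {E : Type*} [NormedAddCommGroup E] [InnerProductSpace ℝ E] [CompleteSpace E]
    [TopologicalSpace.SeparableSpace E] [MeasurableSpace E] [BorelSpace E]
    {X Y : Ω → E} (hX : Measurable X) (hY : Measurable Y)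
    (hindep : IndepFun X Y P)
    {CX M l : ℝ} (hl : 0 ≤ l) (hM0 : 0 ≤ M) (hlM : l * M < 3)
    (hXbd : ∀ᵐ ω ∂P, ‖X ω‖ ≤ CX)
    (hYmean : ∫ ω, Y ω ∂P = 0) (hYbd : ∀ᵐ ω ∂P, ‖Y ω‖ ≤ M) :
    ∫ ω, Real.cosh (l * ‖X ω + Y ω‖) ∂P ≤
      (∫ ω, Real.cosh (l * ‖X ω‖) ∂P)
        * (1 + l^2/2 * (1 - l * M/3)⁻¹ * (∫ ω, ‖Y ω‖^2 ∂P)) := by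
  haveI : SecondCountableTopology E := UniformSpace.secondCountable_of_separable E
  set μ : Measure E := P.map X with hμ
  set ν : Measure E := P.map Y with hν
  haveI : IsProbabilityMeasure μ := Measure.isProbabilityMeasure_map hX.aemeasurable
  haveI : IsProbabilityMeasure ν := Measure.isProbabilityMeasure_map hY.aemeasurable
  have hprod : P.map (fun ω => (X ω, Y ω)) = μ.prod ν :=
    (indepFun_iff_map_prod_eq_prod_map_map hX.aemeasurable hY.aemeasurable).mp hindep
  have hsetM : MeasurableSet {y : E | ‖y‖ ≤ M} :=
    (isClosed_le continuous_norm continuous_const).measurableSet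
  have hsetC : MeasurableSet {x : E | ‖x‖ ≤ CX} :=
    (isClosed_le continuous_norm continuous_const).measurableSet
  have hmean' : ∫ y, y ∂ν = 0 := by
    rw [hν]
    exact (integral_map (φ := Y) hY.aemeasurable aestronglyMeasurable_id).trans hYmean
  have hbd' : ∀ᵐ y ∂ν, ‖y‖ ≤ M := by
    rw [hν, ae_map_iff hY.aemeasurable hsetM]; exact hYbd
  have hXbd' : ∀ᵐ x ∂μ, ‖x‖ ≤ CX := by
    rw [hμ, ae_map_iff hX.aemeasurable hsetC]; exact hXbd
  set K : ℝ := l^2/2 * (1 - l * M/3)⁻¹ with hK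
  have hKpos : 0 ≤ K := by
    apply mul_nonneg (by positivity)
    apply inv_nonneg.2; nlinarith
  have hV : (0:ℝ) ≤ ∫ y, ‖y‖^2 ∂ν := integral_nonneg (fun y => by positivity)
  have hFcont : Continuous fun p : E × E => Real.cosh (l * ‖p.1 + p.2‖) :=
    Real.continuous_cosh.comp (continuous_const.mul ((continuous_fst.add continuous_snd).norm))
  -- a.e. bounds on the product
  have h1 : ∀ᵐ p : E × E ∂(μ.prod ν), ‖p.1‖ ≤ CX := by
    rw [ae_iff]
    have heq : {p : E × E | ¬‖p.1‖ ≤ CX} = {x : E | ¬‖x‖ ≤ CX} ×ˢ (Set.univ : Set E) := by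
      ext p; simp
    rw [heq, Measure.prod_prod]
    rw [ae_iff] at hXbd'
    rw [hXbd', zero_mul]
  have h2 : ∀ᵐ p : E × E ∂(μ.prod ν), ‖p.2‖ ≤ M := by
    rw [ae_iff]
    have heq : {p : E × E | ¬‖p.2‖ ≤ M} = (Set.univ : Set E) ×ˢ {y : E | ¬‖y‖ ≤ M} := by
      ext p; simp
    rw [heq, Measure.prod_prod]
    rw [ae_iff] at hbd'
    rw [hbd', mul_zero]
  have hFint : Integrable (fun p : E × E => Real.cosh (l * ‖p.1 + p.2‖)) (μ.prod ν) := by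
    apply Integrable.mono' (integrable_const (Real.cosh (l * (CX + M))))
      hFcont.aestronglyMeasurable
    filter_upwards [h1, h2] with p hp1 hp2
    rw [Real.norm_eq_abs, abs_of_pos (Real.cosh_pos _)]
    apply Real.cosh_le_cosh.2
    have hCX0 : (0:ℝ) ≤ CX := le_trans (norm_nonneg _) hp1
    rw [abs_of_nonneg (by positivity), abs_of_nonneg (by positivity)]
    apply mul_le_mul_of_nonneg_left _ hl
    calc ‖p.1 + p.2‖ ≤ ‖p.1‖ + ‖p.2‖ := norm_add_le _ _
      _ ≤ CX + M := add_le_add hp1 hp2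
  have hcoshXcont : Continuous fun x : E => Real.cosh (l * ‖x‖) :=
    Real.continuous_cosh.comp (continuous_const.mul continuous_norm)
  calc ∫ ω, Real.cosh (l * ‖X ω + Y ω‖) ∂P
      = ∫ p : E × E, Real.cosh (l * ‖p.1 + p.2‖) ∂(P.map (fun ω => (X ω, Y ω))) := by
        rw [integral_map (hX.prodMk hY).aemeasurable hFcont.aestronglyMeasurable]
    _ = ∫ p : E × E, Real.cosh (l * ‖p.1 + p.2‖) ∂(μ.prod ν) := by rw [hprod]
    _ = ∫ x, (∫ y, Real.cosh (l * ‖x + y‖) ∂ν) ∂μ := integral_prod _ hFint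
    _ ≤ ∫ x, (Real.cosh (l * ‖x‖) * (1 + K * (∫ y, ‖y‖^2 ∂ν))) ∂μ := by
        apply integral_mono_ae hFint.integral_prod_left
        · apply Integrable.mono'
            (integrable_const (Real.cosh (l * CX) * (1 + K * (∫ y, ‖y‖^2 ∂ν))))
            ((hcoshXcont.mul continuous_const).aestronglyMeasurable)
          filter_upwards [hXbd'] with x hx
          simp only [Pi.mul_apply]
          rw [Real.norm_eq_abs, abs_of_nonneg
            (mul_nonneg (le_of_lt (Real.cosh_pos _)) (by positivity))]
          apply mul_le_mul_of_nonneg_right _ (by positivity)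
          apply Real.cosh_le_cosh.2
          have hCX0 : (0:ℝ) ≤ CX := le_trans (norm_nonneg _) hx
          rw [abs_of_nonneg (by positivity), abs_of_nonneg (by positivity)]
          exact mul_le_mul_of_nonneg_left hx hl
        · exact Filter.Eventually.of_forall
            (fun x => inner_step ν hl hM0 hlM hmean' hbd' x)
    _ = (∫ x, Real.cosh (l * ‖x‖) ∂μ) * (1 + K * (∫ y, ‖y‖^2 ∂ν)) := integral_mul_const _ _
    _ = (∫ ω, Real.cosh (l * ‖X ω‖) ∂P) * (1 + K * (∫ ω, ‖Y ω‖^2 ∂P)) := by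
        rw [hμ, hν, integral_map hX.aemeasurable hcoshXcont.aestronglyMeasurable,
          integral_map hY.aemeasurable (show Continuous fun y : E => ‖y‖^2 from continuous_norm.pow 2).aestronglyMeasurable]

private lemma ind_lemma {Ω : Type*} [MeasurableSpace Ω] (P : Measure Ω) [IsProbabilityMeasure P]
    {E : Type*} [NormedAddCommGroup E] [InnerProductSpace ℝ E] [CompleteSpace E]
    [TopologicalSpace.SeparableSpace E] [MeasurableSpace E] [BorelSpace E]
    {n : ℕ} (ξ : Fin n → Ω → E)
    (hmeas : ∀ i, Measurable (ξ i))
    (hindep : iIndepFun ξ P)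
    (hmean : ∀ i, ∫ ω, ξ i ω ∂P = 0)
    {M l : ℝ} (hbdd : ∀ i, ∀ᵐ ω ∂P, ‖ξ i ω‖ ≤ M)
    (hl : 0 ≤ l) (hM0 : 0 ≤ M) (hlM : l * M < 3) :
    ∀ s : Finset (Fin n),
      ∫ ω, Real.cosh (l * ‖∑ i ∈ s, ξ i ω‖) ∂P ≤
        Real.exp (l^2/2 * (1 - l * M/3)⁻¹ * ∑ i ∈ s, ∫ ω, ‖ξ i ω‖^2 ∂P) := by
  haveI : SecondCountableTopology E := UniformSpace.secondCountable_of_separable E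
  intro s
  induction s using Finset.cons_induction with
  | empty => simp
  | cons a s ha ih =>
    have hXm : Measurable (fun ω => ∑ i ∈ s, ξ i ω) :=
      Finset.measurable_sum s (fun i _ => hmeas i)
    have hall : ∀ᵐ ω ∂P, ∀ i, ‖ξ i ω‖ ≤ M := (ae_all_iff).2 hbdd
    have hXbd : ∀ᵐ ω ∂P, ‖∑ i ∈ s, ξ i ω‖ ≤ (s.card : ℝ) * M := by
      filter_upwards [hall] with ω hω
      calc ‖∑ i ∈ s, ξ i ω‖ ≤ ∑ i ∈ s, ‖ξ i ω‖ := norm_sum_le _ _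
        _ ≤ ∑ _i ∈ s, M := Finset.sum_le_sum (fun i _ => hω i)
        _ = (s.card : ℝ) * M := by rw [Finset.sum_const, nsmul_eq_mul]
    have hind : IndepFun (fun ω => ∑ i ∈ s, ξ i ω) (ξ a) P := by
      have h := hindep.indepFun_finsetSum_of_notMem hmeas ha
      have he : (∑ i ∈ s, ξ i) = fun ω => ∑ i ∈ s, ξ i ω := by
        funext ω; exact Finset.sum_apply ω s ξ
      rwa [he] at h
    have hstep := step_lemma P hXm (hmeas a) hind hl hM0 hlM hXbd (hmean a) (hbdd a)
    have hrw : (fun ω => ∑ i ∈ Finset.cons a s ha, ξ i ω)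
        = fun ω => (∑ i ∈ s, ξ i ω) + ξ a ω := by
      funext ω; rw [Finset.sum_cons]; exact add_comm _ _
    have hInonneg : 0 ≤ ∫ ω, Real.cosh (l * ‖∑ i ∈ s, ξ i ω‖) ∂P :=
      integral_nonneg (fun ω => le_of_lt (Real.cosh_pos _))
    have hKpos : (0:ℝ) ≤ l^2/2 * (1 - l * M/3)⁻¹ := by
      apply mul_nonneg (by positivity)
      apply inv_nonneg.2; nlinarith
    have hvar : (0:ℝ) ≤ ∫ ω, ‖ξ a ω‖^2 ∂P := integral_nonneg (fun ω => by positivity)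
    calc ∫ ω, Real.cosh (l * ‖∑ i ∈ Finset.cons a s ha, ξ i ω‖) ∂P
        = ∫ ω, Real.cosh (l * ‖(∑ i ∈ s, ξ i ω) + ξ a ω‖) ∂P := by
            apply integral_congr_ae
            filter_upwards with ω
            rw [Finset.sum_cons, add_comm]
      _ ≤ (∫ ω, Real.cosh (l * ‖∑ i ∈ s, ξ i ω‖) ∂P)
            * (1 + l^2/2 * (1 - l * M/3)⁻¹ * (∫ ω, ‖ξ a ω‖^2 ∂P)) := hstep
      _ ≤ Real.exp (l^2/2 * (1 - l * M/3)⁻¹ * ∑ i ∈ s, ∫ ω, ‖ξ i ω‖^2 ∂P)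
            * Real.exp (l^2/2 * (1 - l * M/3)⁻¹ * (∫ ω, ‖ξ a ω‖^2 ∂P)) := by
          apply mul_le_mul ih ?_ (by positivity) (le_of_lt (Real.exp_pos _))
          have := Real.add_one_le_exp (l^2/2 * (1 - l * M/3)⁻¹ * (∫ ω, ‖ξ a ω‖^2 ∂P))
          linarith
      _ = Real.exp (l^2/2 * (1 - l * M/3)⁻¹ * ∑ i ∈ Finset.cons a s ha, ∫ ω, ‖ξ i ω‖^2 ∂P) := by
          rw [← Real.exp_add, Finset.sum_cons]; ring_nf

/-- Bernstein/Yurinskii concentration in Hilbert spaces: Let `(ξ_i)_{i<n}` be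
independent mean-zero random vectors in a separable Hilbert space, each bounded by `M`
almost surely, with total variance `σ² = E[∑_i ‖ξ_i‖²]`.  Then for any `t > 0`,
`P(‖∑ ξ_i‖ ≥ t) ≤ 2 exp(−t² / (2σ² + 2tM/3))`. -/
theorem bernstein_hilbert_concentration
    {Ω : Type*} [MeasurableSpace Ω] (P : Measure Ω) [IsProbabilityMeasure P]
    {E : Type*} [NormedAddCommGroup E] [InnerProductSpace ℝ E] [CompleteSpace E]
    [TopologicalSpace.SeparableSpace E] [MeasurableSpace E] [BorelSpace E]
    {n : ℕ} (ξ : Fin n → Ω → E)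
    (hmeas : ∀ i, Measurable (ξ i))
    (hindep : iIndepFun ξ P)
    (hmean : ∀ i, ∫ ω, ξ i ω ∂P = 0)
    (M : ℝ) (hbdd : ∀ i, ∀ᵐ ω ∂P, ‖ξ i ω‖ ≤ M)
    (σ2 : ℝ) (hσ2 : σ2 = ∑ i, ∫ ω, ‖ξ i ω‖ ^ 2 ∂P) :
    ∀ t > (0 : ℝ),
      (P {ω | t ≤ ‖∑ i, ξ i ω‖}).toReal
        ≤ 2 * Real.exp (-(t ^ 2) / (2 * σ2 + 2 * t * M / 3)) := by

  intro t ht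
  have hvar_nn : ∀ i : Fin n, (0:ℝ) ≤ ∫ ω, ‖ξ i ω‖ ^ 2 ∂P :=
    fun i => integral_nonneg (fun ω => by positivity)
  have hσnn : 0 ≤ σ2 := by
    rw [hσ2]; exact Finset.sum_nonneg (fun i _ => hvar_nn i)
  rcases eq_or_lt_of_le hσnn with hz | hσpos
  · -- degenerate case: total variance is zero, so all ξ i vanish a.s.
    have hiz : ∀ i : Fin n, ∫ ω, ‖ξ i ω‖ ^ 2 ∂P = 0 := by
      intro i
      have := (Finset.sum_eq_zero_iff_of_nonneg (fun i _ => hvar_nn i)).mp (hσ2 ▸ hz.symm)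
      exact this i (Finset.mem_univ i)
    have hzero : ∀ i : Fin n, ∀ᵐ ω ∂P, ξ i ω = 0 := by
      intro i
      obtain ⟨ω0, hω0⟩ := (hbdd i).exists
      have hM0 : 0 ≤ M := le_trans (norm_nonneg _) hω0
      have hInt : Integrable (fun ω => ‖ξ i ω‖ ^ 2) P := by
        apply Integrable.mono' (integrable_const (M^2))
          ((hmeas i).norm.pow_const 2).aestronglyMeasurable
        filter_upwards [hbdd i] with ω hω
        rw [Real.norm_eq_abs, abs_of_nonneg (by positivity)]
        exact pow_le_pow_left₀ (norm_nonneg _) hω 2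
      have h0 := (integral_eq_zero_iff_of_nonneg_ae
        (Filter.Eventually.of_forall (fun ω => by positivity)) hInt).mp (hiz i)
      filter_upwards [h0] with ω hω
      have : ‖ξ i ω‖ ^ 2 = 0 := hω
      have : ‖ξ i ω‖ = 0 := by nlinarith [norm_nonneg (ξ i ω), sq_nonneg ‖ξ i ω‖]
      exact norm_eq_zero.mp this
    have hsum0 : ∀ᵐ ω ∂P, ∑ i, ξ i ω = 0 := by
      have := ae_all_iff.2 hzero
      filter_upwards [this] with ω hω
      exact Finset.sum_eq_zero (fun i _ => hω i)
    have hP0 : P {ω | t ≤ ‖∑ i, ξ i ω‖} = 0 := by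
      rw [MeasureTheory.measure_eq_zero_iff_ae_notMem]
      filter_upwards [hsum0] with ω hω
      simp only [Set.mem_setOf_eq, hω, norm_zero, not_le]
      exact ht
    rw [hP0]
    simp
    positivity
  · -- main case: σ2 > 0
    have hn : n ≠ 0 := by
      rintro rfl
      rw [Finset.univ_eq_empty, Finset.sum_empty] at hσ2
      rw [hσ2] at hσpos; exact lt_irrefl 0 hσpos
    have hM0 : 0 ≤ M := by
      obtain ⟨ω0, hω0⟩ := (hbdd ⟨0, Nat.pos_of_ne_zero hn⟩).exists
      exact le_trans (norm_nonneg _) hω0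
    set D : ℝ := σ2 + t * M / 3 with hD
    have hDpos : 0 < D := by rw [hD]; positivity
    set l : ℝ := t / D with hl_def
    have hl : 0 < l := div_pos ht hDpos
    have hlM : l * M < 3 := by
      rw [hl_def, div_mul_eq_mul_div, div_lt_iff₀ hDpos]
      rw [hD]; nlinarith
    have hKey := ind_lemma P ξ hmeas hindep hmean hbdd (le_of_lt hl) hM0 hlM Finset.univ
    rw [← hσ2] at hKey
    -- Markov step
    set S : Ω → E := fun ω => ∑ i, ξ i ω with hS
    have hSm : Measurable S := Finset.measurable_sum _ (fun i _ => hmeas i)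
    have hAmeas : MeasurableSet {ω | t ≤ ‖S ω‖} :=
      measurableSet_le measurable_const hSm.norm
    have hall : ∀ᵐ ω ∂P, ∀ i, ‖ξ i ω‖ ≤ M := ae_all_iff.2 hbdd
    have hSbd : ∀ᵐ ω ∂P, ‖S ω‖ ≤ (n : ℝ) * M := by
      filter_upwards [hall] with ω hω
      calc ‖S ω‖ ≤ ∑ i, ‖ξ i ω‖ := norm_sum_le _ _
        _ ≤ ∑ _i : Fin n, M := Finset.sum_le_sum (fun i _ => hω i)
        _ = (n : ℝ) * M := by rw [Finset.sum_const, nsmul_eq_mul, Finset.card_univ,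
              Fintype.card_fin]
    have hScosh_meas : Measurable fun ω => Real.cosh (l * ‖S ω‖) :=
      Real.continuous_cosh.measurable.comp (hSm.norm.const_mul l)
    have hIcosh : Integrable (fun ω => Real.cosh (l * ‖S ω‖)) P := by
      apply Integrable.mono' (integrable_const (Real.cosh (l * ((n:ℝ) * M))))
        hScosh_meas.aestronglyMeasurable
      filter_upwards [hSbd] with ω hω
      rw [Real.norm_eq_abs, abs_of_pos (Real.cosh_pos _)]
      apply Real.cosh_le_cosh.2
      rw [abs_of_nonneg (by positivity), abs_of_nonneg (by positivity)]
      exact mul_le_mul_of_nonneg_left hω (le_of_lt hl)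
    have hMarkov : Real.cosh (l * t) * (P {ω | t ≤ ‖S ω‖}).toReal
        ≤ ∫ ω, Real.cosh (l * ‖S ω‖) ∂P := by
      calc Real.cosh (l * t) * (P {ω | t ≤ ‖S ω‖}).toReal
          ≤ ∫ ω in {ω | t ≤ ‖S ω‖}, Real.cosh (l * ‖S ω‖) ∂P := by
            apply setIntegral_ge_of_const_le_real hAmeas (measure_ne_top P _)
            · intro ω hω
              apply Real.cosh_le_cosh.2
              have hω' : t ≤ ‖S ω‖ := hω
              rw [abs_of_nonneg (by positivity), abs_of_nonneg (by positivity)]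
              exact mul_le_mul_of_nonneg_left hω' (le_of_lt hl)
            · exact hIcosh.integrableOn
        _ ≤ ∫ ω, Real.cosh (l * ‖S ω‖) ∂P :=
            setIntegral_le_integral hIcosh
              (Filter.Eventually.of_forall (fun ω => le_of_lt (Real.cosh_pos _)))
    have hcosh_lb : Real.exp (l * t) / 2 ≤ Real.cosh (l * t) := by
      rw [Real.cosh_eq]
      have := Real.exp_pos (-(l * t))
      linarith
    have hKD : l^2/2 * (1 - l * M/3)⁻¹ * σ2 - l * t = -(t^2) / (2 * σ2 + 2 * t * M / 3) := by
      have hσne : σ2 ≠ 0 := ne_of_gt hσpos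
      have hDne : D ≠ 0 := ne_of_gt hDpos
      have h1 : 1 - l * M/3 = σ2 / D := by
        rw [hl_def]; field_simp; rw [hD]; ring
      rw [h1, hl_def]
      have h2D : 2 * σ2 + 2 * t * M / 3 = 2 * D := by rw [hD]; ring
      rw [h2D]
      field_simp
      ring
    -- combine
    have hPA : (P {ω | t ≤ ‖S ω‖}).toReal
        ≤ Real.exp (l^2/2 * (1 - l * M/3)⁻¹ * σ2) / Real.cosh (l * t) := by
      rw [le_div_iff₀ (Real.cosh_pos _)]
      calc (P {ω | t ≤ ‖S ω‖}).toReal * Real.cosh (l * t)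
          = Real.cosh (l * t) * (P {ω | t ≤ ‖S ω‖}).toReal := mul_comm _ _
        _ ≤ ∫ ω, Real.cosh (l * ‖S ω‖) ∂P := hMarkov
        _ ≤ Real.exp (l^2/2 * (1 - l * M/3)⁻¹ * σ2) := hKey
    calc (P {ω | t ≤ ‖S ω‖}).toReal
        ≤ Real.exp (l^2/2 * (1 - l * M/3)⁻¹ * σ2) / Real.cosh (l * t) := hPA
      _ ≤ Real.exp (l^2/2 * (1 - l * M/3)⁻¹ * σ2) / (Real.exp (l * t) / 2) :=
          div_le_div_of_nonneg_left (le_of_lt (Real.exp_pos _))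
            (by positivity) hcosh_lb
      _ = 2 * Real.exp (l^2/2 * (1 - l * M/3)⁻¹ * σ2 - l * t) := by
          rw [Real.exp_sub]; field_simp
      _ = 2 * Real.exp (-(t ^ 2) / (2 * σ2 + 2 * t * M / 3)) := by rw [hKD]
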